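/- Let M be an N×N real matrix with nonnegative entries and let u ∈ ℝ^N have strictly positive entries, and set D(u) = diag(Me + u)^{-1}. Then the matrix I − Mᵀ D(u) is invertible; consequently, for every v ∈ ℝ^N the linear system (I − Mᵀ D(u)) x̄ = v has a unique solution. -/

import Mathlib

/-- `D(u) = diag(Me + u)⁻¹`, the diagonal matrix with entries `1/((Me)_i + u_i)`. -/
noncomputable def Du {N : ℕ} (M : Matrix (Fin N) (Fin N) ℝ) (u : Fin N → ℝ) :
    Matrix (Fin N) (Fin N) ℝ :=
  Matrix.diagonal fun i => ((∑ j, M i j) + u i)⁻¹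

theorem stmt_9 {N : ℕ} (M : Matrix (Fin N) (Fin N) ℝ) (u : Fin N → ℝ)
    (hM : ∀ i j, 0 ≤ M i j) (hu : ∀ i, 0 < u i) :
    IsUnit (1 - M.transpose * Du M u) ∧
      ∀ v : Fin N → ℝ, ∃! xbar : Fin N → ℝ,
        Matrix.mulVec (1 - M.transpose * Du M u) xbar = v := by
  set d : Fin N → ℝ := fun i => ((∑ j, M i j) + u i)⁻¹ with hd
  set B : Matrix (Fin N) (Fin N) ℝ := 1 - M.transpose * Du M u with hB
  have hS : ∀ i, 0 ≤ ∑ j, M i j := fun i => Finset.sum_nonneg fun j _ => hM i j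
  have hdpos : ∀ i, 0 < d i := fun i => inv_pos.mpr (by linarith [hS i, hu i])
  have hSd : ∀ i, (∑ j, M i j) * d i < 1 := by
    intro i
    rw [hd]
    rw [mul_inv_lt_iff₀ (by linarith [hS i, hu i])]
    linarith [hu i]
  have hBentry : ∀ i k, B i k = (if i = k then 1 else 0) - M k i * d k := by
    intro i k
    simp [hB, Du, Matrix.sub_apply, Matrix.mul_apply, Matrix.one_apply,
      Matrix.diagonal_apply, Finset.sum_ite_eq, hd]
  have hdet : B.det ≠ 0 := by
    apply det_ne_zero_of_sum_col_lt_diag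
    intro k
    have hdiagpos : 0 < B k k := by
      rw [hBentry k k, if_pos rfl]
      have h1 : M k k * d k ≤ (∑ j, M k j) * d k := by
        apply mul_le_mul_of_nonneg_right _ (hdpos k).le
        exact Finset.single_le_sum (fun j _ => hM k j) (Finset.mem_univ k)
      linarith [hSd k]
    have habs : ∀ i, i ≠ k → ‖B i k‖ = M k i * d k := by
      intro i hik
      rw [hBentry i k, if_neg hik, zero_sub, norm_neg, Real.norm_eq_abs,
        abs_of_nonneg (mul_nonneg (hM k i) (hdpos k).le)]
    calc ∑ i ∈ Finset.univ.erase k, ‖B i k‖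
        = ∑ i ∈ Finset.univ.erase k, M k i * d k := by
          apply Finset.sum_congr rfl
          intro i hi
          exact habs i (Finset.mem_erase.mp hi).1
      _ = ((∑ i, M k i) - M k k) * d k := by
          rw [Finset.sum_erase_eq_sub (Finset.mem_univ k), sub_mul]
          ring_nf
          rw [Finset.mul_sum]
          congr 1
          exact Finset.sum_congr rfl fun i _ => mul_comm _ _
      _ < 1 - M k k * d k := by
          rw [sub_mul]; linarith [hSd k]
      _ = B k k := by rw [hBentry k k, if_pos rfl]
      _ ≤ ‖B k k‖ := le_abs_self _
  have hunit : IsUnit B := (Matrix.isUnit_iff_isUnit_det B).mpr (isUnit_iff_ne_zero.mpr hdet)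
  refine ⟨hunit, fun v => ?_⟩
  have hBi : B * B⁻¹ = 1 := Matrix.mul_nonsing_inv B (isUnit_iff_ne_zero.mpr hdet)
  have hBi' : B⁻¹ * B = 1 := Matrix.nonsing_inv_mul B (isUnit_iff_ne_zero.mpr hdet)
  refine ⟨B⁻¹.mulVec v, ?_, ?_⟩
  · show B.mulVec (B⁻¹.mulVec v) = v
    rw [Matrix.mulVec_mulVec, hBi, Matrix.one_mulVec]
  · intro y hy
    have : B⁻¹.mulVec (B.mulVec y) = B⁻¹.mulVec v := by rw [hy]
    rwa [Matrix.mulVec_mulVec, hBi', Matrix.one_mulVec] at this
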